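/- Let (G,∼) be an acyclic turbulence chart (i.e., one with no bands). Then the turbulence polyhedron F₁(G,∼) is bounded. -/

import Mathlib

open Finset

/-- A turbulence chart: a finite undirected graph given by half-edges `H` with a
fixed-point-free involution `op` pairing half-edges into edges, a vertex map `vert`,
and at each internal vertex a partition of its half-edges into two nonempty classes,
encoded by `side : H → Bool`. -/
structure TurbChart where
  V : Type
  H : Type
  [fintV : Fintype V]
  [decV : DecidableEq V]
  [fintH : Fintype H]
  [decH : DecidableEq H]
  vert : H → V
  op : H → H
  side : H → Bool
  op_op : ∀ h, op (op h) = h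
  op_ne : ∀ h, op h ≠ h
  vert_cover : ∀ v, ∃ h, vert h = v
  sides_nonempty : ∀ v,
    2 ≤ (Finset.univ.filter fun h => vert h = v).card →
    ∀ b : Bool, ∃ h, vert h = v ∧ side h = b

attribute [instance] TurbChart.fintV TurbChart.decV TurbChart.fintH TurbChart.decH

namespace TurbChart

variable (T : TurbChart)

def degree (v : T.V) : ℕ := (Finset.univ.filter fun h => T.vert h = v).card

def Fringe (v : T.V) : Prop := T.degree v = 1

def Internal (v : T.V) : Prop := 2 ≤ T.degree v

instance : DecidablePred T.Fringe := fun v =>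
  decidable_of_iff (T.degree v = 1) Iff.rfl

instance : DecidablePred T.Internal := fun v =>
  decidable_of_iff (2 ≤ T.degree v) Iff.rfl

/-- A flow on a turbulence chart: a labelling of edges (encoded as an `op`-invariant
function on half-edges) conserving flow across the two classes at each internal vertex. -/
def IsFlow (F : T.H → ℝ) : Prop :=
  (∀ h, F (T.op h) = F h) ∧
  ∀ v, T.Internal v →
    ∑ h ∈ Finset.univ.filter (fun h => T.vert h = v ∧ T.side h = true), F h =
    ∑ h ∈ Finset.univ.filter (fun h => T.vert h = v ∧ T.side h = false), F h

/-- The strength of a flow: half the sum of its values over fringe incidences. -/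
noncomputable def strength (F : T.H → ℝ) : ℝ :=
  (1 / 2) * ∑ h ∈ Finset.univ.filter (fun h => T.Fringe (T.vert h)), F h

/-- The turbulence polyhedron `F₁(G,∼)`: nonnegative flows of strength 1. -/
def unitFlows : Set (T.H → ℝ) :=
  {F | T.IsFlow F ∧ (∀ h, 0 ≤ F h) ∧ T.strength F = 1}

/-- A string: a walk along oriented edges (an oriented edge is encoded by its tail
half-edge `a`, its head half-edge being `op a`) which crosses the class partition at
each internal vertex it passes through. -/
def IsString (l : List T.H) : Prop :=
  List.Chain' (fun a b => T.vert (T.op a) = T.vert b ∧ T.side (T.op a) ≠ T.side b) l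

/-- A route: a nonempty string starting and ending at fringe vertices. -/
def IsRoute (l : List T.H) : Prop :=
  T.IsString l ∧ l ≠ [] ∧
  (∀ h ∈ l.head?, T.Fringe (T.vert h)) ∧
  (∀ h ∈ l.getLast?, T.Fringe (T.vert (T.op h)))

/-- A band: a nonempty cyclically composable string which is not a proper power. -/
def IsBand (l : List T.H) : Prop :=
  l ≠ [] ∧ T.IsString (l ++ l) ∧
  ¬ ∃ (c : List T.H) (k : ℕ), 2 ≤ k ∧ l = (List.replicate k c).flatten

def Acyclic : Prop := ¬ ∃ l, T.IsBand l

/-- The indicator vector of a walk: multiplicity of each edge (in either orientation). -/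
noncomputable def indic (l : List T.H) : T.H → ℝ :=
  fun h => ((l.count h + l.count (T.op h) : ℕ) : ℝ)

/-- The inverse of a string. -/
def inv (l : List T.H) : List T.H := (l.map T.op).reverse

end TurbChart

/-- A framing on a turbulence chart: a linear order on each class of half-edges. -/
structure Framing (T : TurbChart) where
  lt : T.H → T.H → Prop
  lt_irrefl : ∀ h, ¬ lt h h
  lt_trans : ∀ a b c, lt a b → lt b c → lt a c
  lt_compat : ∀ a b, lt a b → T.vert a = T.vert b ∧ T.side a = T.side b
  lt_total : ∀ a b, a ≠ b → T.vert a = T.vert b → T.side a = T.side b →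
    lt a b ∨ lt b a

namespace TurbChart

variable (T : TurbChart)

/-- Substrings of a trail (a route, or a band where substrings of any power are allowed),
up to inverses. -/
def Substr (t : List T.H) (isBand : Bool) (s : List T.H) : Prop :=
  if isBand then
    ∃ k : ℕ, s <:+: (List.replicate k t).flatten ∨ s <:+: T.inv (List.replicate k t).flatten
  else s <:+: t ∨ s <:+: T.inv t

/-- `p` contains the "low" member of an incompatibility whose "high" member lies in `q`. -/
def IsIncompatPair (R : Framing T) (p q : List T.H × Bool) : Prop :=
  ∃ (e₁ e₂ f₁ f₂ : T.H) (s : List T.H),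
    R.lt (T.op e₁) (T.op e₂) ∧ R.lt f₁ f₂ ∧
    T.IsString (e₁ :: (s ++ [f₁])) ∧ T.IsString (e₂ :: (s ++ [f₂])) ∧
    T.Substr p.1 p.2 (e₁ :: (s ++ [f₁])) ∧ T.Substr q.1 q.2 (e₂ :: (s ++ [f₂]))

def Compatible (R : Framing T) (p q : List T.H × Bool) : Prop :=
  ¬ (T.IsIncompatPair R p q ∨ T.IsIncompatPair R q p)

/-- A trail: a route (`Bool` component `false`) or a band (`true`). -/
def IsTrail (t : List T.H × Bool) : Prop :=
  if t.2 then T.IsBand t.1 else T.IsRoute t.1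

noncomputable def indicT (t : List T.H × Bool) : T.H → ℝ := T.indic t.1

def RouteEquiv (l₁ l₂ : List T.H) : Prop := l₂ = l₁ ∨ l₂ = T.inv l₁

def BandEquiv (l₁ l₂ : List T.H) : Prop :=
  ∃ x y, l₁ = x ++ y ∧ (l₂ = y ++ x ∨ l₂ = T.inv (y ++ x))

def TrailEquiv (t₁ t₂ : List T.H × Bool) : Prop :=
  t₁.2 = t₂.2 ∧ (if t₁.2 then T.BandEquiv t₁.1 t₂.1 else T.RouteEquiv t₁.1 t₂.1)

/-- A bundle: a set of pairwise compatible (hence self-compatible) trails, taken with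
distinct representatives up to equivalence of trails. -/
def IsBundle (R : Framing T) (S : Finset (List T.H × Bool)) : Prop :=
  (∀ t ∈ S, T.IsTrail t) ∧
  (∀ t₁ ∈ S, ∀ t₂ ∈ S, T.Compatible R t₁ t₂) ∧
  (∀ t₁ ∈ S, ∀ t₂ ∈ S, T.TrailEquiv t₁ t₂ → t₁ = t₂)

/-- The bundle simplihedron `Δ₁(K̄)`: unit bundle combinations of the bundle. -/
def unitBundleSimplihedron (S : Finset (List T.H × Bool)) : Set (T.H → ℝ) :=
  {F | ∃ a : List T.H × Bool → ℝ,
    (∀ t ∈ S, 0 ≤ a t) ∧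
    F = ∑ t ∈ S, a t • T.indicT t ∧
    ∑ t ∈ S.filter (fun t => t.2 = false), a t = 1}

/-- Every nonnegative flow has at most one representation as a positive bundle
combination (up to equivalence of trails). -/
def UniquePositiveCombos (R : Framing T) : Prop :=
  ∀ (S₁ S₂ : Finset (List T.H × Bool)) (a₁ a₂ : List T.H × Bool → ℝ),
    T.IsBundle R S₁ → T.IsBundle R S₂ →
    (∀ t ∈ S₁, 0 < a₁ t) → (∀ t ∈ S₂, 0 < a₂ t) →
    (∑ t ∈ S₁, a₁ t • T.indicT t) = (∑ t ∈ S₂, a₂ t • T.indicT t) →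
    (∀ t₁ ∈ S₁, ∃ t₂ ∈ S₂, T.TrailEquiv t₁ t₂ ∧ a₁ t₁ = a₂ t₂) ∧
    (∀ t₂ ∈ S₂, ∃ t₁ ∈ S₁, T.TrailEquiv t₁ t₂ ∧ a₁ t₁ = a₂ t₂)

end TurbChart

section AuxBounded

lemma exists_dup_decomp' {α : Type*} : ∀ (l : List α), ¬ l.Nodup →
    ∃ (a : α) (s t u : List α), l = s ++ a :: (t ++ a :: u)
  | [], h => absurd List.nodup_nil h
  | x :: xs, h => by
    by_cases hx : x ∈ xs
    · obtain ⟨t, u, rfl⟩ := List.append_of_mem hx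
      exact ⟨x, [], t, u, rfl⟩
    · have hxs : ¬ xs.Nodup := fun hn => h (List.nodup_cons.mpr ⟨hx, hn⟩)
      obtain ⟨a, s, t, u, rfl⟩ := exists_dup_decomp' xs hxs
      exact ⟨a, x :: s, t, u, rfl⟩

namespace TurbChart

variable (T : TurbChart)

lemma exists_band_of_sq : ∀ (n : ℕ) (l : List T.H), l.length ≤ n → l ≠ [] →
    T.IsString (l ++ l) → ∃ b, T.IsBand b := by
  intro n
  induction n with
  | zero =>
    intro l hl hne _
    exact absurd (List.length_eq_zero_iff.mp (Nat.le_zero.mp hl)) hne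
  | succ n ih =>
    intro l hl hne hs
    by_cases hp : ∃ (c : List T.H) (k : ℕ), 2 ≤ k ∧ l = (List.replicate k c).flatten
    · obtain ⟨c, k, hk, rfl⟩ := hp
      obtain ⟨m, rfl⟩ : ∃ m, k = m + 2 := ⟨k - 2, by omega⟩
      have hc : c ≠ [] := by
        rintro rfl
        simp at hne
      have hcl : 1 ≤ c.length := List.length_pos_iff.mpr hc
      have hlen : (List.replicate (m + 2) c).flatten.length = (m + 2) * c.length := by
        simp [Nat.mul_comm]
      have hrep : (List.replicate (m + 2) c).flatten
          = c ++ (c ++ (List.replicate m c).flatten) := by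
        simp [List.replicate_succ]
      refine ih c ?_ hc ?_
      · have h2 : (m + 2) * c.length ≤ n + 1 := by rw [← hlen]; exact hl
        nlinarith
      · have hinf : (c ++ c) <:+:
            ((List.replicate (m + 2) c).flatten ++ (List.replicate (m + 2) c).flatten) := by
          refine ⟨[], (List.replicate m c).flatten ++ (List.replicate (m + 2) c).flatten, ?_⟩
          rw [hrep]
          simp [List.append_assoc]
        exact List.IsChain.infix hs hinf
    · exact ⟨l, hne, hs, hp⟩

lemma isString_nodup (hA : T.Acyclic) {l : List T.H} (hs : T.IsString l) : l.Nodup := by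
  by_contra hnd
  obtain ⟨a, s, t, u, rfl⟩ := exists_dup_decomp' _ hnd
  apply hA
  apply T.exists_band_of_sq (a :: t).length (a :: t) le_rfl (by simp)
  have hinf : T.IsString ((a :: t) ++ [a]) := by
    refine List.IsChain.infix hs ⟨s, u, ?_⟩
    simp
  have hc := List.isChain_append.mp hinf
  refine List.isChain_append.mpr ⟨hc.1, hc.1, ?_⟩
  intro x hx y hy
  simp only [List.head?_cons, Option.mem_def, Option.some.injEq] at hy
  subst hy
  exact hc.2.2 x hx a (by simp)

lemma flow_le (hA : T.Acyclic) {F : T.H → ℝ} (hF : T.IsFlow F)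
    (hnn : ∀ h, 0 ≤ F h) (h1 : T.strength F = 1) :
    ∀ (n : ℕ) (l : List T.H) (h : T.H), T.IsString (l ++ [h]) →
      Fintype.card T.H ≤ l.length + 1 + n →
      F h ≤ (Fintype.card T.H : ℝ) ^ n * 2 := by
  have hsum : ∑ g ∈ Finset.univ.filter (fun g => T.Fringe (T.vert g)), F g = 2 := by
    have h2 := h1
    unfold TurbChart.strength at h2
    linarith
  have fringe_le : ∀ hh : T.H, T.Fringe (T.vert (T.op hh)) → F hh ≤ 2 := by
    intro hh hfr
    have hmem : T.op hh ∈ Finset.univ.filter (fun g => T.Fringe (T.vert g)) := by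
      simp [hfr]
    have hle := Finset.single_le_sum (f := F) (fun i _ => hnn i) hmem
    rw [hF.1 hh] at hle
    linarith
  have key : ∀ hh : T.H, T.Internal (T.vert (T.op hh)) →
      F hh ≤ ∑ g ∈ Finset.univ.filter
        (fun g => T.vert g = T.vert (T.op hh) ∧ T.side g = !(T.side (T.op hh))), F g := by
    intro hh hint
    have h2 := hF.2 _ hint
    have hmem : T.op hh ∈ Finset.univ.filter
        (fun g => T.vert g = T.vert (T.op hh) ∧ T.side g = T.side (T.op hh)) := by simp
    have hle := Finset.single_le_sum (f := F) (fun i _ => hnn i) hmem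
    rw [hF.1 hh] at hle
    cases hb : T.side (T.op hh) with
    | true =>
      rw [hb] at hle
      simpa [hb, h2] using hle
    | false =>
      rw [hb] at hle
      simpa [hb, ← h2] using hle
  have deg1 : ∀ hh : T.H, T.Fringe (T.vert (T.op hh)) ∨ T.Internal (T.vert (T.op hh)) := by
    intro hh
    have hpos : 0 < T.degree (T.vert (T.op hh)) :=
      Finset.card_pos.mpr ⟨T.op hh, by simp [TurbChart.degree]⟩
    unfold TurbChart.Fringe TurbChart.Internal
    omega
  have ext_string : ∀ (l : List T.H) (h g : T.H), T.IsString (l ++ [h]) →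
      T.vert g = T.vert (T.op h) → T.side g = !(T.side (T.op h)) →
      T.IsString ((l ++ [h]) ++ [g]) := by
    intro l h g hs hv hside
    refine List.isChain_append.mpr ⟨hs, List.isChain_singleton g, ?_⟩
    intro x hx y hy
    simp only [List.head?_cons, Option.mem_def, Option.some.injEq] at hy
    subst hy
    have hx' : h = x := by simpa using hx
    subst hx'
    exact ⟨hv.symm, by simp [hside]⟩
  intro n
  induction n with
  | zero =>
    intro l h hs hcard
    rcases deg1 h with hfr | hint
    · simpa using fringe_le h hfr
    · exfalso
      obtain ⟨g, hgv, hgs⟩ := T.sides_nonempty _ hint (!(T.side (T.op h)))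
      have hs2 := ext_string l h g hs hgv hgs
      have hnd := T.isString_nodup hA hs2
      have hlen := hnd.length_le_card
      simp at hlen
      omega
  | succ n ih =>
    intro l h hs hcard
    have hc1 : (1 : ℝ) ≤ (Fintype.card T.H : ℝ) := by
      have hp : 0 < Fintype.card T.H := Fintype.card_pos_iff.mpr ⟨h⟩
      exact_mod_cast hp
    have hpow1 : (1 : ℝ) ≤ (Fintype.card T.H : ℝ) ^ n := one_le_pow₀ hc1
    rcases deg1 h with hfr | hint
    · have hb := fringe_le h hfr
      calc F h ≤ 2 := hb
        _ ≤ (Fintype.card T.H : ℝ) ^ (n + 1) * 2 := by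
            have : (1 : ℝ) ≤ (Fintype.card T.H : ℝ) ^ (n + 1) := one_le_pow₀ hc1
            nlinarith
    · set S := Finset.univ.filter
        (fun g => T.vert g = T.vert (T.op h) ∧ T.side g = !(T.side (T.op h))) with hS
      calc F h ≤ ∑ g ∈ S, F g := key h hint
        _ ≤ ∑ _g ∈ S, (Fintype.card T.H : ℝ) ^ n * 2 := by
            refine Finset.sum_le_sum ?_
            intro g hg
            rw [hS, Finset.mem_filter] at hg
            refine ih (l ++ [h]) g (ext_string l h g hs hg.2.1 hg.2.2) ?_
            simp only [List.length_append, List.length_singleton]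
            omega
        _ = (S.card : ℝ) * ((Fintype.card T.H : ℝ) ^ n * 2) := by
            rw [Finset.sum_const, nsmul_eq_mul]
        _ ≤ (Fintype.card T.H : ℝ) * ((Fintype.card T.H : ℝ) ^ n * 2) := by
            have hcle : S.card ≤ Fintype.card T.H := by
              simpa using Finset.card_filter_le Finset.univ _
            have hcle' : (S.card : ℝ) ≤ (Fintype.card T.H : ℝ) := by exact_mod_cast hcle
            nlinarith
        _ = (Fintype.card T.H : ℝ) ^ (n + 1) * 2 := by ring

end TurbChart

end AuxBounded

/-- The turbulence polyhedron of an acyclic turbulence chart (one with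
no bands) is bounded. -/
theorem unitFlows_bounded_of_acyclic (T : TurbChart) (h : T.Acyclic) :
    Bornology.IsBounded T.unitFlows := by
  set C : ℝ := (Fintype.card T.H : ℝ) ^ (Fintype.card T.H) * 2 with hC
  have hC0 : 0 ≤ C := by positivity
  apply Bornology.IsBounded.subset (Metric.isBounded_closedBall (x := (0 : T.H → ℝ)) (r := C))
  intro F hF
  obtain ⟨hflow, hnn, h1⟩ := hF
  rw [Metric.mem_closedBall, dist_zero_right]
  refine (pi_norm_le_iff_of_nonneg hC0).mpr ?_
  intro i
  rw [Real.norm_eq_abs, abs_of_nonneg (hnn i)]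
  exact T.flow_le h hflow hnn h1 (Fintype.card T.H) [] i (List.isChain_singleton i) (by simp)
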